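/- Let p₀ < p₁ < 0, g⟦ρ⟧ < 0, let Γ : [p₁,0] → (0,∞) be continuous, and set λ₀ := (−g⟦ρ⟧(p₁−p₀))^{1/3}. Then for every φ : [p₀,0] → ℝ that is continuous, continuously differentiable on [p₀,p₁] and on [p₁,0], and satisfies φ(p₀) = 0, one has g⟦ρ⟧·φ(p₁)² + ∫_{p₀}^{p₁} λ₀³ φ′(p)² dp + ∫_{p₁}^0 Γ(p)³ φ′(p)² dp ≥ 0. Consequently the Rayleigh quotient ℛ(φ;λ₀) is nonnegative for every nontrivial admissible φ; in particular the minimizing eigenvalue ν(λ₀) is ≥ 0, so the bifurcation value λ* (where ν(λ*) = −1) never equals λ₀. -/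

import Mathlib

open Set intervalIntegral

lemma aux_main (p₀ p₁ gρ : ℝ) (h₀₁ : p₀ < p₁) (h₁ : p₁ < 0) (hgρ : gρ < 0)
    (Γ : ℝ → ℝ) (hΓpos : ∀ p ∈ Set.Icc p₁ 0, 0 < Γ p)
    (lam₀ : ℝ) (hlam₀ : lam₀ = (-gρ * (p₁ - p₀)) ^ ((1 : ℝ) / 3))
    (φ : ℝ → ℝ)
    (hφ1 : ContDiffOn ℝ 1 φ (Set.Icc p₀ p₁))
    (hφ0 : φ p₀ = 0) :
    0 ≤ gρ * φ p₁ ^ 2 + (∫ p in p₀..p₁, lam₀ ^ 3 * deriv φ p ^ 2)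
          + ∫ p in p₁..(0 : ℝ), Γ p ^ 3 * deriv φ p ^ 2 := by
  have hx : (0:ℝ) < -gρ * (p₁ - p₀) := by nlinarith
  have hlam3 : lam₀ ^ 3 = -gρ * (p₁ - p₀) := by
    rw [hlam₀, ← Real.rpow_natCast (_ ^ ((1:ℝ)/3)) 3, ← Real.rpow_mul hx.le]
    norm_num
  set g : ℝ → ℝ := derivWithin φ (Set.Icc p₀ p₁) with hg
  have hgcont : ContinuousOn g (Set.Icc p₀ p₁) :=
    hφ1.continuousOn_derivWithin (uniqueDiffOn_Icc h₀₁) le_rfl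
  have hgint : IntervalIntegrable g MeasureTheory.volume p₀ p₁ :=
    (hgcont.mono (by rw [Set.uIcc_of_le h₀₁.le])).intervalIntegrable
  have hg2int : IntervalIntegrable (fun x => g x ^ 2) MeasureTheory.volume p₀ p₁ :=
    ((hgcont.pow 2).mono (by rw [Set.uIcc_of_le h₀₁.le])).intervalIntegrable
  have heq : ∀ x ∈ Set.Ioo p₀ p₁, deriv φ x = g x := by
    intro x hxm
    have hmem : Set.Icc p₀ p₁ ∈ nhds x := Icc_mem_nhds hxm.1 hxm.2
    exact (derivWithin_of_mem_nhds hmem).symm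
  have hderiv : ∀ x ∈ Set.Ioo p₀ p₁, HasDerivAt φ (g x) x := by
    intro x hxm
    have hmem : Set.Icc p₀ p₁ ∈ nhds x := Icc_mem_nhds hxm.1 hxm.2
    have hd : DifferentiableAt ℝ φ x :=
      ((hφ1.differentiableOn one_ne_zero) x (Set.mem_Icc.mpr ⟨hxm.1.le, hxm.2.le⟩)).differentiableAt hmem
    have := hd.hasDerivAt
    rwa [heq x hxm] at this
  -- FTC
  have hftc : ∫ x in p₀..p₁, g x = φ p₁ - φ p₀ :=
    integral_eq_sub_of_hasDeriv_right_of_le h₀₁.le hφ1.continuousOn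
      (fun x hxm => (hderiv x hxm).hasDerivWithinAt) hgint
  set I : ℝ := ∫ x in p₀..p₁, g x with hI
  set J : ℝ := ∫ x in p₀..p₁, g x ^ 2 with hJ
  set L : ℝ := p₁ - p₀ with hL
  have hLpos : 0 < L := by simp [hL]; linarith
  have hφp₁ : φ p₁ = I := by rw [hftc, hφ0]; ring
  -- the λ₀³ integral equals λ₀³ * J
  have hcongr : (∫ p in p₀..p₁, lam₀ ^ 3 * deriv φ p ^ 2)
      = ∫ p in p₀..p₁, lam₀ ^ 3 * g p ^ 2 := by
    apply intervalIntegral.integral_congr_ae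
    have hae : ∀ᵐ x : ℝ, x ≠ p₁ := by
      have : MeasureTheory.volume ({p₁} : Set ℝ) = 0 := MeasureTheory.measure_singleton p₁
      exact (MeasureTheory.measure_eq_zero_iff_ae_notMem.mp this).mono (by simp)
    filter_upwards [hae] with x hxne hxm
    rw [Set.uIoc_of_le h₀₁.le] at hxm
    rw [heq x ⟨hxm.1, lt_of_le_of_ne hxm.2 hxne⟩]
  have hint2 : (∫ p in p₀..p₁, lam₀ ^ 3 * g p ^ 2) = lam₀ ^ 3 * J := by
    rw [hJ, ← intervalIntegral.integral_const_mul]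
  -- Cauchy–Schwarz: I^2 ≤ L * J
  have hCS : I ^ 2 ≤ L * J := by
    have h0 : (0:ℝ) ≤ ∫ x in p₀..p₁, (g x - I / L) ^ 2 :=
      intervalIntegral.integral_nonneg h₀₁.le (fun u _ => sq_nonneg _)
    have hexp : (∫ x in p₀..p₁, (g x - I / L) ^ 2)
        = J - 2 * (I / L) * I + (I / L) ^ 2 * L := by
      have : ∀ x, (g x - I / L) ^ 2 = g x ^ 2 - 2 * (I / L) * g x + (I / L) ^ 2 := by
        intro x; ring
      simp_rw [this]
      rw [intervalIntegral.integral_add (hg2int.sub (hgint.const_mul _))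
            intervalIntegrable_const,
          intervalIntegral.integral_sub hg2int (hgint.const_mul _),
          intervalIntegral.integral_const_mul, intervalIntegral.integral_const]
      have hLne : p₁ - p₀ ≠ 0 := by linarith
      rw [smul_eq_mul]
      field_simp
      simp only [hI, hJ, hL]; ring
    rw [hexp] at h0
    have : J - I ^ 2 / L ≥ 0 := by
      have e : J - 2 * (I / L) * I + (I / L) ^ 2 * L = J - I ^ 2 / L := by
        field_simp; ring
      linarith [e ▸ h0]
    rw [ge_iff_le, sub_nonneg, div_le_iff₀ hLpos] at this
    linarith
  -- third integral nonneg
  have h3 : 0 ≤ ∫ p in p₁..(0:ℝ), Γ p ^ 3 * deriv φ p ^ 2 := by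
    apply intervalIntegral.integral_nonneg h₁.le
    intro u hu
    exact mul_nonneg (pow_nonneg (hΓpos u hu).le 3) (sq_nonneg _)
  rw [hcongr, hint2, hφp₁, hlam3]
  -- gρ * I^2 + (-gρ * L) * J ≥ 0 since I^2 ≤ L*J and gρ < 0
  nlinarith [hCS]

theorem stmt_12 (p₀ p₁ gρ : ℝ) (h₀₁ : p₀ < p₁) (h₁ : p₁ < 0) (hgρ : gρ < 0)
    (Γ : ℝ → ℝ) (hΓpos : ∀ p ∈ Set.Icc p₁ 0, 0 < Γ p)
    (hΓcont : ContinuousOn Γ (Set.Icc p₁ 0))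
    (lam₀ : ℝ) (hlam₀ : lam₀ = (-gρ * (p₁ - p₀)) ^ ((1 : ℝ) / 3)) :
    (∀ φ : ℝ → ℝ,
      ContinuousOn φ (Set.Icc p₀ 0) →
      ContDiffOn ℝ 1 φ (Set.Icc p₀ p₁) →
      ContDiffOn ℝ 1 φ (Set.Icc p₁ 0) →
      φ p₀ = 0 →
      0 ≤ gρ * φ p₁ ^ 2 + (∫ p in p₀..p₁, lam₀ ^ 3 * deriv φ p ^ 2)
          + ∫ p in p₁..(0 : ℝ), Γ p ^ 3 * deriv φ p ^ 2) ∧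
    (∀ φ : ℝ → ℝ,
      ContinuousOn φ (Set.Icc p₀ 0) →
      ContDiffOn ℝ 1 φ (Set.Icc p₀ p₁) →
      ContDiffOn ℝ 1 φ (Set.Icc p₁ 0) →
      φ p₀ = 0 → φ 0 = 0 → ¬(∀ p ∈ Set.Icc p₀ 0, φ p = 0) →
      0 ≤ (gρ * φ p₁ ^ 2 + (∫ p in p₀..p₁, lam₀ ^ 3 * deriv φ p ^ 2)
            + ∫ p in p₁..(0 : ℝ), Γ p ^ 3 * deriv φ p ^ 2)
          / ((∫ p in p₀..p₁, lam₀ * φ p ^ 2) + ∫ p in p₁..(0 : ℝ), Γ p * φ p ^ 2)) := by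
  have hlampos : 0 < lam₀ := by
    rw [hlam₀]
    exact Real.rpow_pos_of_pos (by nlinarith) _
  constructor
  · intro φ _ hφ1 _ hφ0
    exact aux_main p₀ p₁ gρ h₀₁ h₁ hgρ Γ hΓpos lam₀ hlam₀ φ hφ1 hφ0
  · intro φ _ hφ1 _ hφ0 _ _
    apply div_nonneg
    · exact aux_main p₀ p₁ gρ h₀₁ h₁ hgρ Γ hΓpos lam₀ hlam₀ φ hφ1 hφ0
    · have hA : 0 ≤ ∫ p in p₀..p₁, lam₀ * φ p ^ 2 :=
        intervalIntegral.integral_nonneg h₀₁.le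
          (fun u _ => mul_nonneg hlampos.le (sq_nonneg _))
      have hB : 0 ≤ ∫ p in p₁..(0:ℝ), Γ p * φ p ^ 2 :=
        intervalIntegral.integral_nonneg h₁.le
          (fun u hu => mul_nonneg (hΓpos u hu).le (sq_nonneg _))
      linarith
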